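/- The union of two compatible partially ordered logs is an upper bound of both: if G₁ ⊑ H and G₂ ⊑ H for some partially ordered log H, then L = G₁ ∪ G₂ (union of vertex and edge sets) is a partially ordered log satisfying G₁ ⊑ L and G₂ ⊑ L. -/

import Mathlib

/-- A partially ordered log: a DAG over commands in which any two
conflicting vertices are joined by a directed edge. -/
structure PoLog (C : Type*) (conflict : C → C → Prop) where
  V : Set C
  E : C → C → Prop
  edge_mem : ∀ a b, E a b → a ∈ V ∧ b ∈ V
  acyclic : ∀ c, ¬ Relation.TransGen E c c
  conflict_edge : ∀ a b, a ∈ V → b ∈ V → conflict a b → E a b ∨ E b a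

/-- `G ⊑ H`: `G` is a subgraph of `H` and every edge of `H` into a vertex of `G`
is already an edge of `G`. -/
def PoLog.Prefix {C : Type*} {conflict : C → C → Prop}
    (G H : PoLog C conflict) : Prop :=
  G.V ⊆ H.V ∧ (∀ a b, G.E a b → H.E a b) ∧ (∀ a b, H.E a b → b ∈ G.V → G.E a b)

/-- the union of two compatible partially ordered logs is a
partially ordered log and an upper bound of both. -/
theorem union_upper_bound {C : Type*} {conflict : C → C → Prop}
    (G₁ G₂ H : PoLog C conflict)
    (h₁ : G₁.Prefix H) (h₂ : G₂.Prefix H) :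
    ∃ L : PoLog C conflict,
      L.V = G₁.V ∪ G₂.V ∧
      (∀ a b, L.E a b ↔ (G₁.E a b ∨ G₂.E a b)) ∧
      G₁.Prefix L ∧ G₂.Prefix L := by
  have sub : ∀ a b, (G₁.E a b ∨ G₂.E a b) → H.E a b := by
    rintro a b (h | h)
    · exact h₁.2.1 a b h
    · exact h₂.2.1 a b h
  refine ⟨⟨G₁.V ∪ G₂.V, fun a b => G₁.E a b ∨ G₂.E a b, ?_, ?_, ?_⟩, rfl,
    fun a b => Iff.rfl, ?_, ?_⟩
  · rintro a b (h | h)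
    · exact ⟨Or.inl (G₁.edge_mem a b h).1, Or.inl (G₁.edge_mem a b h).2⟩
    · exact ⟨Or.inr (G₂.edge_mem a b h).1, Or.inr (G₂.edge_mem a b h).2⟩
  · intro c hc
    exact H.acyclic c (Relation.TransGen.mono sub c c hc)
  · rintro a b (ha | ha) (hb | hb) hcab
    · exact (G₁.conflict_edge a b ha hb hcab).imp Or.inl Or.inl
    · rcases H.conflict_edge a b (h₁.1 ha) (h₂.1 hb) hcab with h | h
      · exact Or.inl (Or.inr (h₂.2.2 a b h hb))
      · exact Or.inr (Or.inl (h₁.2.2 b a h ha))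
    · rcases H.conflict_edge a b (h₂.1 ha) (h₁.1 hb) hcab with h | h
      · exact Or.inl (Or.inl (h₁.2.2 a b h hb))
      · exact Or.inr (Or.inr (h₂.2.2 b a h ha))
    · exact (G₂.conflict_edge a b ha hb hcab).imp Or.inr Or.inr
  · exact ⟨fun x hx => Or.inl hx, fun a b h => Or.inl h, by
      rintro a b (h | h) hb
      · exact h
      · exact h₁.2.2 a b (h₂.2.1 a b h) hb⟩
  · exact ⟨fun x hx => Or.inr hx, fun a b h => Or.inr h, by
      rintro a b (h | h) hb
      · exact h₂.2.2 a b (h₁.2.1 a b h) hb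
      · exact h⟩
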